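/- For every l ∈ {1, …, m}, E[(Z_l / S) · 1_{S > c}] = (λ_l / Λ) · (1 − Σ_{h=0}^{c} Λ^h e^{−Λ} / h!). -/

import Mathlib

open MeasureTheory ProbabilityTheory
open scoped NNReal ENNReal

lemma binom_div_factorial (x y : ℝ) (n : ℕ) :
    ∑ a ∈ Finset.range (n+1), x^a / a.factorial * (y^(n-a) / (n-a).factorial)
      = (x+y)^n / n.factorial := by
  rw [add_pow, Finset.sum_div]
  refine Finset.sum_congr rfl fun a ha => ?_
  have h := Nat.choose_mul_factorial_mul_factorial (Finset.mem_range_succ_iff.mp ha)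
  have h' : ((n.choose a : ℝ) * a.factorial * (n-a).factorial) = n.factorial := by
    exact_mod_cast congrArg Nat.cast h
  have ha0 : (a.factorial : ℝ) ≠ 0 := Nat.cast_ne_zero.mpr (Nat.factorial_ne_zero a)
  have hb0 : ((n-a).factorial : ℝ) ≠ 0 := Nat.cast_ne_zero.mpr (Nat.factorial_ne_zero _)
  have hn0 : (n.factorial : ℝ) ≠ 0 := Nat.cast_ne_zero.mpr (Nat.factorial_ne_zero n)
  field_simp
  linear_combination (-(x ^ a * y ^ (n - a))) * h'

lemma poissonMeasure_singleton (r : ℝ≥0) (n : ℕ) :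
    poissonMeasure r {n} = ENNReal.ofReal (poissonPMFReal r n) := by
  rw [ProbabilityTheory.poissonMeasure_singleton]
  rfl

lemma poissonPMFReal_conv (a b : ℝ≥0) (n : ℕ) :
    ∑ i ∈ Finset.range (n+1), poissonPMFReal a i * poissonPMFReal b (n-i)
      = poissonPMFReal (a+b) n := by
  unfold poissonPMFReal
  have : ∀ i ∈ Finset.range (n+1),
      Real.exp (-(a:ℝ)) * (a:ℝ)^i / i.factorial * (Real.exp (-(b:ℝ)) * (b:ℝ)^(n-i) / (n-i).factorial)
      = (Real.exp (-(a:ℝ)) * Real.exp (-(b:ℝ))) *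
        ((a:ℝ)^i / i.factorial * ((b:ℝ)^(n-i) / (n-i).factorial)) := by
    intro i _; ring
  rw [Finset.sum_congr rfl this, ← Finset.mul_sum, binom_div_factorial, ← Real.exp_add]
  push_cast
  ring

lemma poisson_conv (a b : ℝ≥0) :
    Measure.map (fun p : ℕ × ℕ => p.1 + p.2) ((poissonMeasure a).prod (poissonMeasure b))
      = poissonMeasure (a+b) := by
  refine Measure.ext_of_singleton fun n => ?_
  rw [Measure.map_apply (measurable_of_countable _) (measurableSet_singleton n)]
  have hset : (fun p : ℕ×ℕ => p.1+p.2) ⁻¹' {n} = ⋃ p ∈ Finset.HasAntidiagonal.antidiagonal n, {p} := by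
    ext p
    simp [Finset.HasAntidiagonal.mem_antidiagonal]
  rw [hset, measure_biUnion_finset (fun p _ q _ hpq => by simp [Set.disjoint_singleton, hpq])
    (fun p _ => measurableSet_singleton p)]
  rw [Finset.Nat.sum_antidiagonal_eq_sum_range_succ_mk]
  have : ∀ i ∈ Finset.range (n+1),
      (poissonMeasure a).prod (poissonMeasure b) {(i, n - i)}
        = ENNReal.ofReal (poissonPMFReal a i * poissonPMFReal b (n-i)) := by
    intro i _
    rw [← Set.singleton_prod_singleton, Measure.prod_prod, _root_.poissonMeasure_singleton,
      _root_.poissonMeasure_singleton, ← ENNReal.ofReal_mul poissonPMFReal_nonneg]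
  rw [Finset.sum_congr rfl this, ← ENNReal.ofReal_sum_of_nonneg
    (fun i _ => mul_nonneg poissonPMFReal_nonneg poissonPMFReal_nonneg),
    poissonPMFReal_conv, _root_.poissonMeasure_singleton]

lemma poissonMeasure_zero' : poissonMeasure 0 = Measure.dirac 0 := by
  refine Measure.ext_of_singleton fun n => ?_
  rw [_root_.poissonMeasure_singleton]
  cases n with
  | zero => simp [poissonPMFReal, Measure.dirac_apply' _ (measurableSet_singleton _)]
  | succ k =>
    rw [Measure.dirac_apply' _ (measurableSet_singleton _)]
    simp [poissonPMFReal]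

lemma iIndepFun_ae_congr {Ω : Type*} [MeasurableSpace Ω] {μ : Measure Ω} {ι : Type*}
    {β : ι → Type*} {mβ : ∀ i, MeasurableSpace (β i)} {f g : ∀ i, Ω → β i}
    (h : ∀ i, f i =ᵐ[μ] g i) (hf : iIndepFun f μ) : iIndepFun g μ := by
  rw [iIndepFun_iff_measure_inter_preimage_eq_mul] at hf ⊢
  intro S sets hsets
  have hae : ∀ᵐ ω ∂μ, ∀ i ∈ S, f i ω = g i ω := by
    have := MeasureTheory.ae_ball_iff (μ := μ) S.countable_toSet
      (p := fun ω i _ => f i ω = g i ω)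
    exact this.mpr fun i _ => h i
  have h1 : μ (⋂ i ∈ S, g i ⁻¹' sets i) = μ (⋂ i ∈ S, f i ⁻¹' sets i) := by
    apply measure_congr
    apply Filter.eventuallyEq_set.mpr
    filter_upwards [hae] with ω hω
    simp only [Set.mem_iInter, Set.mem_preimage]
    constructor
    · intro hh i hi; rw [hω i hi]; exact hh i hi
    · intro hh i hi; rw [← hω i hi]; exact hh i hi
  have h2 : ∀ i ∈ S, μ (g i ⁻¹' sets i) = μ (f i ⁻¹' sets i) := by
    intro i hi
    apply measure_congr
    apply Filter.eventuallyEq_set.mpr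
    filter_upwards [h i] with ω hω
    rw [Set.mem_preimage, Set.mem_preimage, hω]
  rw [h1, Finset.prod_congr rfl h2]
  exact hf S hsets

lemma map_finsetSum_poisson {Ω : Type*} [MeasurableSpace Ω] (μ : Measure Ω)
    [IsProbabilityMeasure μ] {m : ℕ} (lam : Fin m → ℝ≥0) (Z : Fin m → Ω → ℕ)
    (hmeas : ∀ j, Measurable (Z j))
    (hindep : iIndepFun Z μ)
    (hZ : ∀ j, Measure.map (Z j) μ = poissonMeasure (lam j)) (s : Finset (Fin m)) :
    Measure.map (∑ j ∈ s, Z j) μ = poissonMeasure (∑ j ∈ s, lam j) := by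
  induction s using Finset.induction_on with
  | empty =>
    simp only [Finset.sum_empty]
    have h0 : (0 : Ω → ℕ) = fun _ => (0 : ℕ) := rfl
    rw [h0, Measure.map_const, measure_univ, one_smul, poissonMeasure_zero']
  | insert i s hi ih =>
    rw [Finset.sum_insert hi, Finset.sum_insert hi]
    have hTmeas : Measurable (∑ j ∈ s, Z j) := by
      rw [show ((∑ j ∈ s, Z j) : Ω → ℕ) = fun ω => ∑ j ∈ s, Z j ω from funext fun ω => Finset.sum_apply ω s Z]
      exact Finset.measurable_sum s fun j _ => hmeas j
    have hIF : IndepFun (∑ j ∈ s, Z j) (Z i) μ :=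
      hindep.indepFun_finsetSum_of_notMem hmeas hi
    have hjoint := (indepFun_iff_map_prod_eq_prod_map_map
      (hmeas i).aemeasurable hTmeas.aemeasurable).mp hIF.symm
    have hcomp : (Z i + ∑ j ∈ s, Z j)
        = (fun p : ℕ × ℕ => p.1 + p.2) ∘ (fun ω => (Z i ω, (∑ j ∈ s, Z j) ω)) := rfl
    rw [hcomp, ← Measure.map_map (measurable_of_countable _) ((hmeas i).prodMk hTmeas),
      hjoint, hZ i, ih, poisson_conv]

lemma antidiag_sum (lam rho : ℝ≥0) (hlam : 0 < lam) {n : ℕ} (hn : 1 ≤ n) :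
    ∑ p ∈ Finset.HasAntidiagonal.antidiagonal n,
        poissonPMFReal lam p.1 * poissonPMFReal rho p.2 * ((p.1 : ℝ)/(n:ℝ))
      = ((lam:ℝ)/((lam:ℝ)+(rho:ℝ))) * poissonPMFReal (lam+rho) n := by
  obtain ⟨k, rfl⟩ : ∃ k, n = k + 1 := ⟨n - 1, (Nat.succ_pred_eq_of_pos hn).symm⟩
  rw [Finset.Nat.sum_antidiagonal_eq_sum_range_succ_mk, Finset.sum_range_succ']
  have hstep : ∀ i ∈ Finset.range (k+1),
      poissonPMFReal lam (i+1) * poissonPMFReal rho (k+1-(i+1)) * (((i+1 : ℕ) : ℝ)/((k+1 : ℕ):ℝ))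
        = ((lam:ℝ)/((k:ℝ)+1)) * (poissonPMFReal lam i * poissonPMFReal rho (k-i)) := by
    intro i _
    have h1 : k + 1 - (i+1) = k - i := by omega
    rw [h1]
    unfold poissonPMFReal
    rw [Nat.factorial_succ]
    have hi0 : ((i:ℝ)+1) ≠ 0 := by positivity
    have hif : ((i.factorial : ℝ)) ≠ 0 := Nat.cast_ne_zero.mpr (Nat.factorial_ne_zero i)
    have hk0 : ((k:ℝ)+1) ≠ 0 := by positivity
    push_cast
    field_simp
    ring
  rw [Finset.sum_congr rfl hstep, ← Finset.mul_sum, poissonPMFReal_conv lam rho k]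
  have hL : (0:ℝ) < (lam:ℝ) + (rho:ℝ) := by
    have : (0:ℝ) < (lam:ℝ) := hlam
    positivity
  unfold poissonPMFReal
  rw [Nat.factorial_succ]
  have hkf : ((k.factorial : ℝ)) ≠ 0 := Nat.cast_ne_zero.mpr (Nat.factorial_ne_zero k)
  have hk0 : ((k:ℝ)+1) ≠ 0 := by positivity
  push_cast
  field_simp
  ring

lemma tsum_poisson_ratio (lam rho : ℝ≥0) (hlam : 0 < lam) (c : ℕ) :
    ∑' a : ℕ, poissonPMFReal lam a * ∑' b : ℕ, poissonPMFReal rho b *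
        ((a:ℝ)/(((a+b : ℕ)):ℝ) * (if c < a + b then (1:ℝ) else 0))
      = ((lam:ℝ)/((lam:ℝ)+(rho:ℝ))) *
          (1 - ∑ h ∈ Finset.range (c+1), poissonPMFReal (lam+rho) h) := by
  set P := poissonPMFReal lam with hP
  set Q := poissonPMFReal rho with hQ
  set w : ℕ × ℕ → ℝ := fun p => (p.1:ℝ)/(((p.1+p.2 : ℕ)):ℝ) * (if c < p.1 + p.2 then (1:ℝ) else 0)
    with hw
  set f : ℕ × ℕ → ℝ := fun p => P p.1 * Q p.2 * w p with hf
  have hPn : ∀ a, 0 ≤ P a := fun a => poissonPMFReal_nonneg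
  have hQn : ∀ b, 0 ≤ Q b := fun b => poissonPMFReal_nonneg
  have hw0 : ∀ p, 0 ≤ w p := by
    intro p; apply mul_nonneg (div_nonneg (by positivity) (by positivity)); split <;> norm_num
  have hw1 : ∀ p, w p ≤ 1 := by
    intro p
    have hr : (p.1:ℝ)/(((p.1+p.2 : ℕ)):ℝ) ≤ 1 := by
      rcases Nat.eq_zero_or_pos (p.1 + p.2) with h | h
      · obtain ⟨h1, _⟩ := Nat.add_eq_zero.mp h
        simp [h1]
      · rw [div_le_one (by exact_mod_cast h)]
        exact_mod_cast Nat.le_add_right p.1 p.2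
    calc w p ≤ (p.1:ℝ)/(((p.1+p.2 : ℕ)):ℝ) * 1 := by
            apply mul_le_mul_of_nonneg_left _ (div_nonneg (by positivity) (by positivity))
            split <;> norm_num
      _ ≤ 1 := by rw [mul_one]; exact hr
  have hsumP : Summable P := (poissonPMFRealSum lam).summable
  have hsumQ : Summable Q := (poissonPMFRealSum rho).summable
  have hsumPQ : Summable (fun p : ℕ × ℕ => P p.1 * Q p.2) :=
    hsumP.mul_of_nonneg hsumQ hPn hQn
  have hf0 : ∀ p, 0 ≤ f p := fun p => mul_nonneg (mul_nonneg (hPn _) (hQn _)) (hw0 p)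
  have hfle : ∀ p, f p ≤ P p.1 * Q p.2 := fun p =>
    mul_le_of_le_one_right (mul_nonneg (hPn _) (hQn _)) (hw1 p)
  have hsumf : Summable f := Summable.of_nonneg_of_le hf0 hfle hsumPQ
  have h1 : ∀ a : ℕ, P a * ∑' b, Q b * w (a, b) = ∑' b, f (a, b) := by
    intro a
    rw [← tsum_mul_left]
    exact tsum_congr fun b => (mul_assoc _ _ _).symm
  calc ∑' a : ℕ, P a * ∑' b : ℕ, Q b * w (a, b)
      = ∑' a, ∑' b, f (a, b) := tsum_congr h1
    _ = ∑' p : ℕ × ℕ, f p := (Summable.tsum_prod' hsumf fun a => hsumf.prod_factor a).symm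
    _ = ∑' x : Σ n : ℕ, Finset.HasAntidiagonal.antidiagonal n, f (Finset.HasAntidiagonal.sigmaAntidiagonalEquivProd x) :=
        (Finset.HasAntidiagonal.sigmaAntidiagonalEquivProd.tsum_eq f).symm
    _ = ∑' n : ℕ, ∑' x : Finset.HasAntidiagonal.antidiagonal n, f x :=
        Summable.tsum_sigma' (fun n => (hasSum_fintype _).summable)
          (Finset.HasAntidiagonal.sigmaAntidiagonalEquivProd.summable_iff.mpr hsumf)
    _ = ∑' n : ℕ, ∑ p ∈ Finset.HasAntidiagonal.antidiagonal n, f p :=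
        tsum_congr fun n => Finset.tsum_subtype _ f
    _ = ((lam:ℝ)/((lam:ℝ)+(rho:ℝ))) *
          (1 - ∑ h ∈ Finset.range (c+1), poissonPMFReal (lam+rho) h) := ?_
  set K := (lam:ℝ)/((lam:ℝ)+(rho:ℝ)) with hK
  set R := poissonPMFReal (lam+rho) with hR
  have hKnn : 0 ≤ K := div_nonneg (by positivity) (by positivity)
  have hG : ∀ n : ℕ, ∑ p ∈ Finset.HasAntidiagonal.antidiagonal n, f p = if c < n then K * R n else 0 := by
    intro n
    by_cases hcn : c < n
    · rw [if_pos hcn]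
      have hterm : ∀ p ∈ Finset.HasAntidiagonal.antidiagonal n, f p = P p.1 * Q p.2 * ((p.1:ℝ)/(n:ℝ)) := by
        intro p hp
        have := Finset.HasAntidiagonal.mem_antidiagonal.mp hp
        simp only [hf, hw, this, if_pos hcn, mul_one]
      rw [Finset.sum_congr rfl hterm]
      exact antidiag_sum lam rho hlam (by omega)
    · rw [if_neg hcn]
      apply Finset.sum_eq_zero
      intro p hp
      have := Finset.HasAntidiagonal.mem_antidiagonal.mp hp
      simp [hf, hw, this, hcn]
  rw [tsum_congr hG]
  have hRs : Summable R := (poissonPMFRealSum (lam+rho)).summable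
  have hRt : ∑' n, R n = 1 := (poissonPMFRealSum (lam+rho)).tsum_eq
  set g : ℕ → ℝ := fun n => if c < n then K * R n else 0 with hg
  have hgs : Summable g := by
    apply Summable.of_nonneg_of_le (fun n => ?_) (fun n => ?_) (hRs.mul_left K)
    · simp only [hg]; split
      exacts [mul_nonneg hKnn poissonPMFReal_nonneg, le_refl 0]
    · simp only [hg]; split
      exacts [le_refl _, mul_nonneg hKnn poissonPMFReal_nonneg]
  set sC : Set ℕ := (((Finset.range (c+1) : Finset ℕ) : Set ℕ))ᶜ with hsC
  have hcompl1 := Summable.sum_add_tsum_compl (s := Finset.range (c+1)) hgs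
  have hcompl2 := Summable.sum_add_tsum_compl (s := Finset.range (c+1)) hRs
  have hzero : ∑ n ∈ Finset.range (c+1), g n = 0 := by
    apply Finset.sum_eq_zero
    intro n hn
    have : ¬ c < n := by simp at hn; omega
    simp [hg, this]
  have heq : ∑' (x : sC), g x
      = K * ∑' (x : sC), R x := by
    rw [← tsum_mul_left]
    apply tsum_congr
    intro x
    have hx : c < (x : ℕ) := by
      have h2 := x.2
      simp only [hsC, Set.mem_compl_iff, Finset.mem_coe, Finset.mem_range] at h2
      omega
    simp [hg, hx]
  have : ∑' n, g n = K * (1 - ∑ h ∈ Finset.range (c+1), R h) := by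
    rw [← hcompl1, hzero, zero_add, heq]
    have : ∑' (x : sC), R x
        = 1 - ∑ h ∈ Finset.range (c+1), R h := by
      rw [← hRt, ← hcompl2]; ring
    rw [this]
  exact this

/-- Let `Z_1, …, Z_m` be independent Poisson random variables with parameters
`λ_1, …, λ_m > 0`, `Λ = λ_1 + … + λ_m` and `S = Z_1 + … + Z_m`. For every `l`,
`E[(Z_l / S) · 1_{S > c}] = (λ_l / Λ) · (1 − Σ_{h=0}^{c} Λ^h e^{−Λ} / h!)`
(with the convention `Z_l/S := 0` when `S = 0`). -/
theorem expectation_poisson_ratio_indicator_gt {Ω : Type*} [MeasurableSpace Ω]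
    (μ : Measure Ω) [IsProbabilityMeasure μ]
    (m c : ℕ) (hm : 1 ≤ m) (hc : 1 ≤ c)
    (lam : Fin m → NNReal) (hlam : ∀ j, 0 < lam j)
    (Z : Fin m → Ω → ℕ)
    (hindep : iIndepFun Z μ)
    (hZ : ∀ j, Measure.map (Z j) μ = poissonMeasure (lam j))
    (l : Fin m) :
    ∫ ω, ((Z l ω : ℝ) / ((∑ j, Z j ω : ℕ) : ℝ)) * (if c < ∑ j, Z j ω then (1 : ℝ) else 0) ∂μ =
      ((lam l : ℝ) / (∑ j, (lam j : ℝ))) *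
        (1 - ∑ h ∈ Finset.range (c + 1),
          (∑ j, (lam j : ℝ)) ^ h * Real.exp (-(∑ j, (lam j : ℝ))) / (Nat.factorial h)) := by
  classical
  have haem : ∀ j, AEMeasurable (Z j) μ := by
    intro j
    apply aemeasurable_of_map_neZero
    rw [hZ j]
    refine ⟨fun h0 => ?_⟩
    have h1 : (poissonMeasure (lam j)) Set.univ = 1 := measure_univ
    rw [h0] at h1
    simp at h1
  set g : Fin m → Ω → ℕ := fun j => (haem j).mk (Z j) with hg
  have hgmeas : ∀ j, Measurable (g j) := fun j => (haem j).measurable_mk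
  have hgae : ∀ j, Z j =ᵐ[μ] g j := fun j => (haem j).ae_eq_mk
  have hgindep : iIndepFun g μ := iIndepFun_ae_congr hgae hindep
  have hgZ : ∀ j, Measure.map (g j) μ = poissonMeasure (lam j) := fun j => by
    rw [← Measure.map_congr (hgae j), hZ j]
  have hint_eq : ∫ ω, ((Z l ω : ℝ) / ((∑ j, Z j ω : ℕ) : ℝ)) *
        (if c < ∑ j, Z j ω then (1 : ℝ) else 0) ∂μ
      = ∫ ω, ((g l ω : ℝ) / ((∑ j, g j ω : ℕ) : ℝ)) *
        (if c < ∑ j, g j ω then (1 : ℝ) else 0) ∂μ := by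
    apply integral_congr_ae
    have hall : ∀ᵐ ω ∂μ, ∀ j, Z j ω = g j ω := (MeasureTheory.ae_all_iff).mpr hgae
    filter_upwards [hall] with ω hω
    rw [hω l, show ∑ j, Z j ω = ∑ j, g j ω from Finset.sum_congr rfl fun j _ => hω j]
  rw [hint_eq]
  set ρ : ℝ≥0 := ∑ j ∈ Finset.univ.erase l, lam j with hρ
  set T : Ω → ℕ := ∑ j ∈ Finset.univ.erase l, g j with hT
  have hTapp : ∀ ω, T ω = ∑ j ∈ Finset.univ.erase l, g j ω := by
    intro ω; rw [hT]; exact Finset.sum_apply ω _ g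
  have hTmeas : Measurable T := by
    rw [show T = fun ω => ∑ j ∈ Finset.univ.erase l, g j ω from funext hTapp]
    exact Finset.measurable_sum _ fun j _ => hgmeas j
  have hTlaw : Measure.map T μ = poissonMeasure ρ :=
    map_finsetSum_poisson μ lam g hgmeas hgindep hgZ _
  have hIF : IndepFun (g l) T μ :=
    (hgindep.indepFun_finsetSum_of_notMem hgmeas (Finset.notMem_erase l Finset.univ)).symm
  have hjoint : Measure.map (fun ω => (g l ω, T ω)) μ
      = (poissonMeasure (lam l)).prod (poissonMeasure ρ) := by
    rw [(indepFun_iff_map_prod_eq_prod_map_map (hgmeas l).aemeasurable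
      hTmeas.aemeasurable).mp hIF, hgZ l, hTlaw]
  have hSsum : ∀ ω, (∑ j, g j ω) = g l ω + T ω := by
    intro ω
    rw [hTapp ω]
    exact (Finset.add_sum_erase Finset.univ (fun j => g j ω) (Finset.mem_univ l)).symm
  set F : ℕ × ℕ → ℝ :=
    fun p => (p.1 : ℝ) / ((p.1 + p.2 : ℕ) : ℝ) * (if c < p.1 + p.2 then (1:ℝ) else 0) with hF
  have hFmeas : Measurable F := measurable_of_countable F
  have hF0 : ∀ p, 0 ≤ F p := by
    intro p
    apply mul_nonneg (div_nonneg (by positivity) (by positivity))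
    split <;> norm_num
  have hF1 : ∀ p, F p ≤ 1 := by
    intro p
    have hr : (p.1:ℝ)/(((p.1+p.2 : ℕ)):ℝ) ≤ 1 := by
      rcases Nat.eq_zero_or_pos (p.1 + p.2) with h | h
      · obtain ⟨h1, _⟩ := Nat.add_eq_zero.mp h
        simp [h1]
      · rw [div_le_one (by exact_mod_cast h)]
        exact_mod_cast Nat.le_add_right p.1 p.2
    calc F p ≤ (p.1:ℝ)/(((p.1+p.2 : ℕ)):ℝ) * 1 := by
          apply mul_le_mul_of_nonneg_left _ (div_nonneg (by positivity) (by positivity))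
          split <;> norm_num
      _ ≤ 1 := by rw [mul_one]; exact hr
  have hFbd : ∀ p, ‖F p‖ ≤ 1 := by
    intro p
    rw [Real.norm_eq_abs, abs_of_nonneg (hF0 p)]
    exact hF1 p
  have hrw : (fun ω => ((g l ω : ℝ) / ((∑ j, g j ω : ℕ) : ℝ)) *
        (if c < ∑ j, g j ω then (1 : ℝ) else 0)) = fun ω => F (g l ω, T ω) := by
    funext ω
    rw [hF]
    simp only [hSsum ω]
  rw [show (∫ ω, ((g l ω : ℝ) / ((∑ j, g j ω : ℕ) : ℝ)) *
        (if c < ∑ j, g j ω then (1 : ℝ) else 0) ∂μ) = ∫ ω, F (g l ω, T ω) ∂μ from by rw [hrw],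
    ← integral_map ((hgmeas l).prodMk hTmeas).aemeasurable hFmeas.aestronglyMeasurable, hjoint]
  have hFint : Integrable F ((poissonMeasure (lam l)).prod (poissonMeasure ρ)) :=
    ⟨hFmeas.aestronglyMeasurable, HasFiniteIntegral.of_bounded (C := 1)
      (Filter.Eventually.of_forall hFbd)⟩
  rw [MeasureTheory.integral_prod F hFint]
  have hto : ∀ (r : ℝ≥0) (a : ℕ), ((poissonPMF r a)).toReal = poissonPMFReal r a := by
    intro r a
    rw [show poissonPMF r a = ENNReal.ofReal (poissonPMFReal r a) from rfl,
      ENNReal.toReal_ofReal poissonPMFReal_nonneg]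
  have hInner : ∀ a : ℕ, (∫ b, F (a, b) ∂(poissonMeasure ρ))
      = ∑' b, poissonPMFReal ρ b * F (a, b) := by
    intro a
    have hintb : Integrable (fun b => F (a, b)) ((poissonPMF ρ).toMeasure) :=
      ⟨(measurable_of_countable _).aestronglyMeasurable,
        HasFiniteIntegral.of_bounded (C := 1) (Filter.Eventually.of_forall fun b => hFbd (a, b))⟩
    rw [show poissonMeasure ρ = (poissonPMF ρ).toMeasure from Measure.ext_of_singleton fun n => by
        rw [ProbabilityTheory.poissonMeasure_singleton, PMF.toMeasure_apply_singleton _ _ (measurableSet_singleton n),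
          ← poissonPMFReal_ofReal_eq_poissonPMF]; rfl,
      PMF.integral_eq_tsum _ _ hintb]
    exact tsum_congr fun b => by rw [smul_eq_mul, hto]
  have hQsum : Summable (poissonPMFReal ρ) := (poissonPMFRealSum ρ).summable
  have hQtsum : ∑' b, poissonPMFReal ρ b = 1 := (poissonPMFRealSum ρ).tsum_eq
  have hOuterInt : Integrable (fun a => ∫ b, F (a, b) ∂(poissonMeasure ρ))
      ((poissonPMF (lam l)).toMeasure) := by
    refine ⟨(measurable_of_countable _).aestronglyMeasurable,
      HasFiniteIntegral.of_bounded (C := 1) (Filter.Eventually.of_forall fun a => ?_)⟩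
    calc ‖∫ b, F (a, b) ∂(poissonMeasure ρ)‖
        ≤ 1 * ((poissonMeasure ρ) Set.univ).toReal :=
          norm_integral_le_of_norm_le_const (Filter.Eventually.of_forall fun b => hFbd (a, b))
      _ = 1 := by simp [measure_univ]
  rw [show poissonMeasure (lam l) = (poissonPMF (lam l)).toMeasure from Measure.ext_of_singleton fun n => by
        rw [ProbabilityTheory.poissonMeasure_singleton, PMF.toMeasure_apply_singleton _ _ (measurableSet_singleton n),
          ← poissonPMFReal_ofReal_eq_poissonPMF]; rfl,
    PMF.integral_eq_tsum _ _ hOuterInt]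
  have hts : ∑' a, ((poissonPMF (lam l) a)).toReal • (∫ b, F (a, b) ∂(poissonMeasure ρ))
      = ∑' a : ℕ, poissonPMFReal (lam l) a * ∑' b : ℕ, poissonPMFReal ρ b *
        ((a:ℝ)/(((a+b : ℕ)):ℝ) * (if c < a + b then (1:ℝ) else 0)) :=
    tsum_congr fun a => by rw [smul_eq_mul, hto, hInner a]
  rw [hts, tsum_poisson_ratio (lam l) ρ (hlam l) c]
  have hcast : ((lam l):ℝ) + (ρ:ℝ) = ∑ j, (lam j:ℝ) := by
    rw [hρ]
    push_cast
    exact Finset.add_sum_erase Finset.univ (fun j => ((lam j):ℝ)) (Finset.mem_univ l)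
  have hcast2 : ((lam l + ρ : ℝ≥0):ℝ) = ∑ j, (lam j:ℝ) := by
    rw [NNReal.coe_add]; exact hcast
  have hsum : ∑ h ∈ Finset.range (c+1), poissonPMFReal (lam l + ρ) h
      = ∑ h ∈ Finset.range (c+1),
          (∑ j, (lam j:ℝ))^h * Real.exp (-(∑ j, (lam j:ℝ)))/(Nat.factorial h) :=
    Finset.sum_congr rfl fun h _ => by
      rw [show poissonPMFReal (lam l + ρ) h
        = Real.exp (-((lam l + ρ : ℝ≥0):ℝ)) * ((lam l + ρ : ℝ≥0):ℝ)^h / (Nat.factorial h) from rfl,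
        hcast2]
      ring
  rw [hcast, hsum]
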